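/- Every planar order on a progressive graph satisfies condition (U2); that is, if (G, ≺) is a POP-graph, then for every progressive vertex v of G, the edge O(v)^- is the immediate successor of I(v)^+ in (E(G), ≺), and hence Ī(v) ∩ Ō(v) = ∅ and Ē(v) = Ī(v) ∪ Ō(v) for every vertex v. -/

import Mathlib

variable {V E : Type}

/-- Edge reachability `e1 → e2`: a directed path of edges `f_0, …, f_k` with `k ≥ 1`,
`f_0 = e1`, `f_k = e2` and `t f_{i-1} = s f_i`. -/
def eReach (s t : E → V) : E → E → Prop :=
  Relation.TransGen (fun a b => t a = s b)

/-- Vertex reachability `v → w`: a directed path from `v` to `w` using at least one edge. -/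
def vReach (s t : E → V) : V → V → Prop :=
  Relation.TransGen (fun v w => ∃ e, s e = v ∧ t e = w)

/-- A directed graph is acyclic if no vertex reaches itself. -/
def Acyclic (s t : E → V) : Prop := ∀ v, ¬ vReach s t v v

/-- `I(v)`: incoming edges of `v`. -/
def inE (t : E → V) (v : V) : Set E := {e | t e = v}

/-- `O(v)`: outgoing edges of `v`. -/
def outE (s : E → V) (v : V) : Set E := {e | s e = v}

/-- Convex hull `X̄` of `X` in the linear order `le`: the interval `{y | X^- ≤ y ≤ X^+}`
(empty when `X` is empty). -/
def hull (le : E → E → Prop) (X : Set E) : Set E :=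
  {y | ∃ a ∈ X, ∃ b ∈ X, le a y ∧ le y b}

/-- The strict order associated to a linear order `le`. -/
def ltOf (le : E → E → Prop) (a b : E) : Prop := le a b ∧ a ≠ b

/-- A source: no incoming edges. -/
def IsSource (t : E → V) (v : V) : Prop := inE t v = ∅

/-- A sink: no outgoing edges. -/
def IsSink (s : E → V) (v : V) : Prop := outE s v = ∅

/-- A progressive graph: acyclic and every source and every sink has degree 1. -/
def Progressive (s t : E → V) : Prop :=
  Acyclic s t ∧
  ∀ v, (IsSource t v ∨ IsSink s v) → ({e | s e = v ∨ t e = v} : Set E).ncard = 1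

/-- `I(G)`: input edges, those whose source vertex is a source of `G`. -/
def inputE (s t : E → V) : Set E := {e | IsSource t (s e)}

/-- `O(G)`: output edges, those whose target vertex is a sink of `G`. -/
def outputE (s t : E → V) : Set E := {e | IsSink s (t e)}

/-- Condition (U1) = (P1): `e1 → e2` implies `e1 ≺ e2`. -/
def U1 (s t : E → V) (le : E → E → Prop) : Prop :=
  ∀ e1 e2, eReach s t e1 e2 → ltOf le e1 e2

/-- Condition (U2): for every vertex `v`, `Ī(v) ∩ Ō(v) = ∅` and `Ē(v) = Ī(v) ∪ Ō(v)`. -/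
def U2 (s t : E → V) (le : E → E → Prop) : Prop :=
  ∀ v, hull le (inE t v) ∩ hull le (outE s v) = ∅ ∧
    hull le (inE t v ∪ outE s v) = hull le (inE t v) ∪ hull le (outE s v)

/-- Condition (U3). -/
def U3 (s t : E → V) (le : E → E → Prop) : Prop :=
  ∀ v1 v2,
    ((inE t v1 ∩ hull le (inE t v2)).Nonempty →
      hull le (inE t v1) ⊆ hull le (inE t v2)) ∧
    ((outE s v1 ∩ hull le (outE s v2)).Nonempty →
      hull le (outE s v1) ⊆ hull le (outE s v2))

/-- Condition (U4): for every progressive vertex `v`, `I(G) ∩ Ō(v) = ∅` and `O(G) ∩ Ī(v) = ∅`. -/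
def U4 (s t : E → V) (le : E → E → Prop) : Prop :=
  ∀ v, ¬ IsSource t v → ¬ IsSink s v →
    inputE s t ∩ hull le (outE s v) = ∅ ∧ outputE s t ∩ hull le (inE t v) = ∅

/-- An upward planar order: a linear order on the edges satisfying (U1), (U2), (U3). -/
def IsUPO (s t : E → V) (le : E → E → Prop) : Prop :=
  IsLinearOrder E le ∧ U1 s t le ∧ U2 s t le ∧ U3 s t le

/-- Condition (P2). -/
def P2 (s t : E → V) (le : E → E → Prop) : Prop :=
  ∀ e1 e2 e3, ltOf le e1 e2 → ltOf le e2 e3 → eReach s t e1 e3 →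
    eReach s t e1 e2 ∨ eReach s t e2 e3

/-- Condition (P̃2). -/
def P2t (s t : E → V) (le : E → E → Prop) : Prop :=
  ∀ e1 e2 e3, ltOf le e1 e2 → ltOf le e2 e3 → t e1 = s e3 →
    eReach s t e1 e2 ∨ eReach s t e2 e3

/-- Condition (P3) (for distinct vertices). -/
def P3 (s t : E → V) (le : E → E → Prop) : Prop :=
  ∀ v1 v2, v1 ≠ v2 →
    ((inE t v1 ∩ hull le (inE t v2)).Nonempty → vReach s t v1 v2) ∧
    ((outE s v1 ∩ hull le (outE s v2)).Nonempty → vReach s t v2 v1)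

/-- Condition (A): for distinct `v1 v2`, `∅ ≠ Ī(v1) ⊆ Ī(v2)` implies `v1 → v2`,
and `∅ ≠ Ō(v1) ⊆ Ō(v2)` implies `v2 → v1`. -/
def CondA (s t : E → V) (le : E → E → Prop) : Prop :=
  ∀ v1 v2, v1 ≠ v2 →
    ((hull le (inE t v1)).Nonempty → hull le (inE t v1) ⊆ hull le (inE t v2) →
      vReach s t v1 v2) ∧
    ((hull le (outE s v1)).Nonempty → hull le (outE s v1) ⊆ hull le (outE s v2) →
      vReach s t v2 v1)

/-- A POP-graph: a progressive graph with a planar order ((P1) and (P2)). -/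
def IsPOP (s t : E → V) (le : E → E → Prop) : Prop :=
  Progressive s t ∧ IsLinearOrder E le ∧ U1 s t le ∧ P2 s t le

/-- `U(v) = {w | Ō(v) ⊊ Ō(w)}` when `O(v) ≠ ∅`, and `U(v) = ∅` otherwise. -/
def Uset (s : E → V) (le : E → E → Prop) (v : V) : Set V :=
  {w | (outE s v).Nonempty ∧ hull le (outE s v) ⊂ hull le (outE s w)}

/-- `D(v) = {w | Ī(v) ⊊ Ī(w)}` when `I(v) ≠ ∅`, and `D(v) = ∅` otherwise. -/
def Dset (t : E → V) (le : E → E → Prop) (v : V) : Set V :=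
  {w | (inE t v).Nonempty ∧ hull le (inE t v) ⊂ hull le (inE t w)}

/-- A CPP-extension of `G = (s, t)`: a POP-graph `(s', t', le')` with an embedding
`(φ0, φ1)` satisfying (E1)–(E4). -/
def IsCPP {V' E' : Type} (s t : E → V) (s' t' : E' → V')
    (le' : E' → E' → Prop) (φ0 : V → V') (φ1 : E → E') : Prop :=
  Function.Injective φ0 ∧ Function.Injective φ1 ∧
  (∀ e, s' (φ1 e) = φ0 (s e)) ∧ (∀ e, t' (φ1 e) = φ0 (t e)) ∧
  IsPOP s' t' le' ∧
  -- (E1)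
  Set.range φ0 = {v : V' | ¬ IsSource t' v ∧ ¬ IsSink s' v} ∧
  -- (E2)
  Nat.card E' = Nat.card E + ({v : V | IsSource t v}).ncard + ({v : V | IsSink s v}).ncard ∧
  -- (E3)
  (∀ v w, IsSource t v → IsSink s w → inE t' (φ0 v) ∩ outE s' (φ0 w) = ∅) ∧
  -- (E4)
  (∀ e' : E', e' ∉ Set.range φ1 → e' ∉ inputE s' t' → e' ∉ outputE s' t' →
    ((∃ a ∈ outE s' (s' e'), ltOf le' a e') ∧ (∃ b ∈ outE s' (s' e'), ltOf le' e' b)) ∨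
    ((∃ a ∈ inE t' (t' e'), ltOf le' a e') ∧ (∃ b ∈ inE t' (t' e'), ltOf le' e' b)))
/-- every planar order on a progressive graph satisfies (U2): for any
progressive vertex `v`, `O(v)⁻` is the immediate successor of `I(v)⁺`, and hence
`Ī(v) ∩ Ō(v) = ∅` and `Ē(v) = Ī(v) ∪ Ō(v)` for every vertex. -/

private lemma finmax_aux {E : Type} (le : E → E → Prop) (hlin : IsLinearOrder E le) :
    ∀ (F : Finset E), F.Nonempty → ∃ a ∈ F, ∀ x ∈ F, le x a := by
  classical
  intro F
  induction F using Finset.induction_on with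
  | empty => intro h; exact absurd rfl h.ne_empty
  | insert e F' hnot ih =>
    intro _
    rcases F'.eq_empty_or_nonempty with h | h
    · subst h
      exact ⟨e, Finset.mem_insert_self e _, by
        intro x hx
        rcases Finset.mem_insert.1 hx with rfl | hx
        · exact hlin.toIsPartialOrder.toIsPreorder.toRefl.refl x
        · exact absurd hx (Finset.notMem_empty x)⟩
    · obtain ⟨m, hm, hmax⟩ := ih h
      rcases hlin.toTotal.total e m with hle | hle
      · exact ⟨m, Finset.mem_insert_of_mem hm, by
          intro x hx
          rcases Finset.mem_insert.1 hx with rfl | hx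
          · exact hle
          · exact hmax x hx⟩
      · exact ⟨e, Finset.mem_insert_self e _, by
          intro x hx
          rcases Finset.mem_insert.1 hx with rfl | hx
          · exact hlin.toIsPartialOrder.toIsPreorder.toRefl.refl x
          · exact hlin.toIsPartialOrder.toIsPreorder.toIsTrans.trans x m e (hmax x hx) hle⟩

private lemma finmin_aux {E : Type} (le : E → E → Prop) (hlin : IsLinearOrder E le) :
    ∀ (F : Finset E), F.Nonempty → ∃ a ∈ F, ∀ x ∈ F, le a x := by
  classical
  intro F
  induction F using Finset.induction_on with
  | empty => intro h; exact absurd rfl h.ne_empty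
  | insert e F' hnot ih =>
    intro _
    rcases F'.eq_empty_or_nonempty with h | h
    · subst h
      exact ⟨e, Finset.mem_insert_self e _, by
        intro x hx
        rcases Finset.mem_insert.1 hx with rfl | hx
        · exact hlin.toIsPartialOrder.toIsPreorder.toRefl.refl x
        · exact absurd hx (Finset.notMem_empty x)⟩
    · obtain ⟨m, hm, hmin⟩ := ih h
      rcases hlin.toTotal.total e m with hle | hle
      · exact ⟨e, Finset.mem_insert_self e _, by
          intro x hx
          rcases Finset.mem_insert.1 hx with rfl | hx
          · exact hlin.toIsPartialOrder.toIsPreorder.toRefl.refl x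
          · exact hlin.toIsPartialOrder.toIsPreorder.toIsTrans.trans e m x hle (hmin x hx)⟩
      · exact ⟨m, Finset.mem_insert_of_mem hm, by
          intro x hx
          rcases Finset.mem_insert.1 hx with rfl | hx
          · exact hle
          · exact hmin x hx⟩

theorem pop_satisfies_U2 {V E : Type} [Fintype V] [Fintype E]
    (s t : E → V) (le : E → E → Prop) (hPOP : IsPOP s t le) :
    (∀ v, ¬ IsSource t v → ¬ IsSink s v →
      ∃ a ∈ inE t v, ∃ b ∈ outE s v,
        (∀ x ∈ inE t v, le x a) ∧ (∀ x ∈ outE s v, le b x) ∧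
        ltOf le a b ∧ ∀ f, ltOf le a f → ltOf le f b → False) ∧
    U2 s t le := by

  classical
  obtain ⟨⟨hAcyc, _hDeg⟩, hlin, hU1, hP2⟩ := hPOP
  have lrefl : ∀ x, le x x := fun x => hlin.toIsPartialOrder.toIsPreorder.toRefl.refl x
  have ltrans : ∀ x y z, le x y → le y z → le x z :=
    fun x y z => hlin.toIsPartialOrder.toIsPreorder.toIsTrans.trans x y z
  have lanti : ∀ x y, le x y → le y x → x = y :=
    fun x y => hlin.toIsPartialOrder.toAntisymm.antisymm x y
  have ltot : ∀ x y, le x y ∨ le y x := fun x y => hlin.toTotal.total x y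
  -- any incoming edge is less than any outgoing edge
  have hIO : ∀ v, ∀ i ∈ inE t v, ∀ o ∈ outE s v, ltOf le i o := by
    intro v i hi o ho
    exact hU1 i o (Relation.TransGen.single (hi.trans ho.symm))
  have key : ∀ v, ¬ IsSource t v → ¬ IsSink s v →
      ∃ a ∈ inE t v, ∃ b ∈ outE s v,
        (∀ x ∈ inE t v, le x a) ∧ (∀ x ∈ outE s v, le b x) ∧
        ltOf le a b ∧ ∀ f, ltOf le a f → ltOf le f b → False := by
    intro v hsrc hsnk
    have hI : (inE t v).Nonempty := Set.nonempty_iff_ne_empty.2 hsrc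
    have hO : (outE s v).Nonempty := Set.nonempty_iff_ne_empty.2 hsnk
    obtain ⟨a, haF, hamax⟩ := finmax_aux le hlin (inE t v).toFinset
      (by obtain ⟨x, hx⟩ := hI; exact ⟨x, Set.mem_toFinset.2 hx⟩)
    obtain ⟨b, hbF, hbmin⟩ := finmin_aux le hlin (outE s v).toFinset
      (by obtain ⟨x, hx⟩ := hO; exact ⟨x, Set.mem_toFinset.2 hx⟩)
    have haI : a ∈ inE t v := Set.mem_toFinset.1 haF
    have hbO : b ∈ outE s v := Set.mem_toFinset.1 hbF
    refine ⟨a, haI, b, hbO, ?_, ?_, hIO v a haI b hbO, ?_⟩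
    · intro x hx; exact hamax x (Set.mem_toFinset.2 hx)
    · intro x hx; exact hbmin x (Set.mem_toFinset.2 hx)
    · intro f haf hfb
      have hreach : eReach s t a b := Relation.TransGen.single (haI.trans hbO.symm)
      rcases hP2 a f b haf hfb hreach with h | h
      · obtain ⟨g, hag, hgf0⟩ := Relation.TransGen.head'_iff.1 h
        have hgO : g ∈ outE s v := by
          show s g = v; rw [← hag]; exact haI
        rcases Relation.reflTransGen_iff_eq_or_transGen.1 hgf0 with rfl | hgf
        · have := hbmin f (Set.mem_toFinset.2 hgO)
          exact hfb.2 (lanti f b hfb.1 this)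
        · have hgf' : ltOf le g f := hU1 g f hgf
          have hbg := hbmin g (Set.mem_toFinset.2 hgO)
          have : le b f := ltrans b g f hbg hgf'.1
          exact hfb.2 (lanti f b hfb.1 this)
      · cases h with
        | single h1 =>
          have hfI : f ∈ inE t v := by
            show t f = v; rw [h1]; exact hbO
          have := hamax f (Set.mem_toFinset.2 hfI)
          exact haf.2 (lanti a f haf.1 this)
        | tail hfg hgb =>
          rename_i g
          have hgI : g ∈ inE t v := by
            show t g = v; rw [hgb]; exact hbO
          have hfg' : ltOf le f g := hU1 f g hfg
          have hga := hamax g (Set.mem_toFinset.2 hgI)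
          have : le f a := ltrans f g a hfg'.1 hga
          exact haf.2 (lanti a f haf.1 this)
  refine ⟨key, ?_⟩
  intro v
  constructor
  · apply Set.eq_empty_iff_forall_notMem.2
    rintro x ⟨⟨i1, hi1, i2, hi2, _, hxi2⟩, ⟨o1, ho1, _, _, ho1x, _⟩⟩
    have h1 : ltOf le i2 o1 := hIO v i2 hi2 o1 ho1
    have h2 : le o1 i2 := ltrans o1 x i2 ho1x hxi2
    exact h1.2 (lanti i2 o1 h1.1 h2)
  · ext x
    constructor
    · rintro ⟨p, hp, q, hq, hpx, hxq⟩
      rcases hp with hpI | hpO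
      · rcases hq with hqI | hqO
        · exact Or.inl ⟨p, hpI, q, hqI, hpx, hxq⟩
        · -- p ∈ I, q ∈ O : use immediate successor
          have hsrc : ¬ IsSource t v := fun h => (h ▸ hpI : p ∈ (∅ : Set E))
          have hsnk : ¬ IsSink s v := fun h => (h ▸ hqO : q ∈ (∅ : Set E))
          obtain ⟨a, haI, b, hbO, hamax, hbmin, hab, hgap⟩ := key v hsrc hsnk
          rcases ltot x a with hxa | hax
          · exact Or.inl ⟨p, hpI, a, haI, hpx, hxa⟩
          · by_cases hxeq : x = a
            · exact Or.inl ⟨p, hpI, a, haI, hpx, hxeq ▸ lrefl x⟩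
            · rcases ltot b x with hbx | hxb
              · exact Or.inr ⟨b, hbO, q, hqO, hbx, hxq⟩
              · by_cases hxb' : x = b
                · exact Or.inr ⟨b, hbO, q, hqO, hxb' ▸ lrefl x, hxq⟩
                · exact absurd (hgap x ⟨hax, fun h => hxeq h.symm⟩ ⟨hxb, hxb'⟩) not_false
      · rcases hq with hqI | hqO
        · have h1 : ltOf le q p := hIO v q hqI p hpO
          have h2 : le p q := ltrans p x q hpx hxq
          exact absurd (lanti q p h1.1 h2) h1.2
        · exact Or.inr ⟨p, hpO, q, hqO, hpx, hxq⟩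
    · rintro (⟨p, hp, q, hq, hpx, hxq⟩ | ⟨p, hp, q, hq, hpx, hxq⟩)
      · exact ⟨p, Or.inl hp, q, Or.inl hq, hpx, hxq⟩
      · exact ⟨p, Or.inr hp, q, Or.inr hq, hpx, hxq⟩
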